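/- Let α ∈ (0,1), let g : ℝ^d → ℝ^d satisfy a global Lipschitz condition with constant L > 0, let T > 0, and let f, h : [0,T] → ℝ^d be continuous. If x_f and x_h are the unique continuous solutions on [0,T] of the singular Volterra integral equations x_f(t) = f(t) + (1/Γ(α)) ∫₀ᵗ (t−s)^{α−1} g(x_f(s)) ds and x_h(t) = h(t) + (1/Γ(α)) ∫₀ᵗ (t−s)^{α−1} g(x_h(s)) ds, then in the supremum norm on C([0,T], ℝ^d), ‖x_f − x_h‖_∞ ≤ ‖f − h‖_∞ · E_α(L T^α). In particular, the solution depends continuously on the input function f in the supremum norm. -/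

import Mathlib

open Real MeasureTheory Set

lemma real_beta {a b t : ℝ} (ha : 0 < a) (hb : 0 < b) (ht : 0 ≤ t) (hab : 1 < a + b) :
    ∫ s in (0:ℝ)..t, s ^ (a-1) * (t - s) ^ (b-1) =
      t ^ (a + b - 1) * (Real.Gamma a * Real.Gamma b / Real.Gamma (a+b)) := by
  rcases ht.eq_or_lt with rfl|ht'
  · simp [Real.zero_rpow (by linarith : a + b - 1 ≠ 0)]
  · have hG : Complex.Gamma ((a:ℂ) + b) ≠ 0 := by
      rw [← Complex.ofReal_add, Complex.Gamma_ofReal]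
      exact_mod_cast (Real.Gamma_pos_of_pos (by linarith)).ne'
    have hbeta : Complex.betaIntegral a b =
        ((Real.Gamma a * Real.Gamma b / Real.Gamma (a+b) : ℝ) : ℂ) := by
      have h1 := Complex.Gamma_mul_Gamma_eq_betaIntegral (s := (a:ℂ)) (t := (b:ℂ))
        (by simpa using ha) (by simpa using hb)
      rw [Complex.ofReal_div, Complex.ofReal_mul, ← Complex.Gamma_ofReal, ← Complex.Gamma_ofReal,
        ← Complex.Gamma_ofReal, Complex.ofReal_add, eq_div_iff hG, mul_comm, ← h1]
    have key := Complex.betaIntegral_scaled (a : ℂ) (b : ℂ) ht'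
    have hcast : ((∫ s in (0:ℝ)..t, s ^ (a-1) * (t - s) ^ (b-1) : ℝ) : ℂ)
        = ∫ s in (0:ℝ)..t, (s:ℂ) ^ ((a:ℂ) - 1) * ((t:ℂ) - s) ^ ((b:ℂ) - 1) := by
      rw [← intervalIntegral.integral_ofReal]
      refine intervalIntegral.integral_congr fun s hs => ?_
      rw [Set.uIcc_of_le ht] at hs
      push_cast
      rw [Complex.ofReal_cpow hs.1, Complex.ofReal_cpow (by linarith [hs.2] : (0:ℝ) ≤ t - s)]
      push_cast; ring
    have : ((∫ s in (0:ℝ)..t, s ^ (a-1) * (t - s) ^ (b-1) : ℝ) : ℂ)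
        = ((t ^ (a + b - 1) * (Real.Gamma a * Real.Gamma b / Real.Gamma (a+b)) : ℝ) : ℂ) := by
      rw [hcast, key, hbeta]
      push_cast
      rw [Complex.ofReal_cpow ht]
      push_cast; ring
    exact_mod_cast this

/-- smul version of mul_continuousOn -/
lemma intInt_smul_continuousOn' {E : Type*} [NormedAddCommGroup E] [NormedSpace ℝ E]
    {f : ℝ → ℝ} {g : ℝ → E} {a b : ℝ} (hab : a ≤ b)
    (hf : IntervalIntegrable f volume a b) (hg : ContinuousOn g (Set.Icc a b)) :
    IntervalIntegrable (fun x => f x • g x) volume a b := by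
  rw [intervalIntegrable_iff, uIoc_of_le hab] at hf ⊢
  obtain ⟨C, hC⟩ := (isCompact_Icc.image_of_continuousOn hg).isBounded.exists_norm_le
  have hgm : AEStronglyMeasurable g (volume.restrict (Ioc a b)) :=
    (hg.mono Ioc_subset_Icc_self).aestronglyMeasurable measurableSet_Ioc
  refine Integrable.mono' (hf.norm.mul_const C) (hf.aestronglyMeasurable.smul hgm) ?_
  refine (ae_restrict_iff' measurableSet_Ioc).2 (ae_of_all _ fun x hx => ?_)
  rw [norm_smul]
  exact mul_le_mul_of_nonneg_left (hC _ ⟨x, Ioc_subset_Icc_self hx, rfl⟩) (norm_nonneg _)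
lemma gamma_step {α y : ℝ} (hα0 : 0 < α) (hα1 : α < 1) (hy : 1 ≤ y) :
    y * Real.Gamma y ≤ Real.Gamma (y + α) * (y + α) ^ (1 - α) := by
  have hy0 : 0 < y := lt_of_lt_of_le one_pos hy
  have hyα : 0 < y + α := by linarith
  have hc := Real.convexOn_log_Gamma.2 (mem_Ioi.mpr hyα)
    (mem_Ioi.mpr (by linarith : (0:ℝ) < y + 1 + α)) hα0.le (by linarith : (0:ℝ) ≤ 1 - α)
    (by ring)
  have harg : α • (y + α) + (1 - α) • (y + 1 + α) = y + 1 := by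
    simp only [smul_eq_mul]; ring
  rw [harg] at hc
  simp only [Function.comp_apply, smul_eq_mul] at hc
  rw [Real.Gamma_add_one hy0.ne', (by ring : y + 1 + α = (y + α) + 1),
    Real.Gamma_add_one hyα.ne'] at hc
  have hGy : 0 < Real.Gamma y := Real.Gamma_pos_of_pos hy0
  have hGyα : 0 < Real.Gamma (y + α) := Real.Gamma_pos_of_pos hyα
  rw [Real.log_mul hy0.ne' hGy.ne', Real.log_mul hyα.ne' hGyα.ne'] at hc
  -- hc : log y + log Γ y ≤ α * log Γ(y+α) + (1-α) * (log (y+α) + log Γ(y+α))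
  have key : Real.log (y * Real.Gamma y) ≤
      Real.log (Real.Gamma (y + α) * (y + α) ^ (1 - α)) := by
    rw [Real.log_mul hy0.ne' hGy.ne',
      Real.log_mul hGyα.ne' (Real.rpow_pos_of_pos hyα _).ne',
      Real.log_rpow hyα]
    nlinarith [hc]
  have := Real.exp_le_exp.mpr key
  rwa [Real.exp_log (by positivity), Real.exp_log (by positivity)] at this

lemma ml_summable' {α x : ℝ} (hα0 : 0 < α) (hα1 : α < 1) (hx : 0 < x) :
    Summable (fun k : ℕ => x ^ k / Real.Gamma (α * k + 1)) := by
  refine summable_of_ratio_norm_eventually_le (r := 1/2) (by norm_num) ?_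
  have hN : ∀ᶠ k : ℕ in Filter.atTop, (4 * x) ≤ (α * k + 1) ^ α := by
    have ht : Filter.Tendsto (fun k : ℕ => α * k + 1) Filter.atTop Filter.atTop := by
      apply Filter.tendsto_atTop_add_const_right
      exact Filter.Tendsto.const_mul_atTop hα0 tendsto_natCast_atTop_atTop
    have := (tendsto_rpow_atTop hα0).comp ht
    exact this.eventually_ge_atTop (4 * x)
  filter_upwards [hN] with k hk
  set y : ℝ := α * k + 1 with hy
  have hy1 : 1 ≤ y := by
    have : (0:ℝ) ≤ α * k := by positivity
    linarith
  have hy0 : 0 < y := lt_of_lt_of_le one_pos hy1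
  have hyα : 0 < y + α := by linarith
  have hGy : 0 < Real.Gamma y := Real.Gamma_pos_of_pos hy0
  have hGyα : 0 < Real.Gamma (y + α) := Real.Gamma_pos_of_pos hyα
  -- Γ(y+α) ≥ y Γ(y) / (y+α)^(1-α) ≥ Γ(y) y^α / 2 ≥ 2x Γ(y)
  have h1 : y * Real.Gamma y ≤ Real.Gamma (y + α) * (y + α) ^ (1 - α) := gamma_step hα0 hα1 hy1
  have h2 : (y + α) ^ (1 - α) ≤ 2 * y ^ (1 - α) := by
    calc (y + α) ^ (1 - α) ≤ (2 * y) ^ (1 - α) := by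
          apply Real.rpow_le_rpow hyα.le (by linarith) (by linarith)
      _ = 2 ^ (1 - α) * y ^ (1 - α) := Real.mul_rpow (by norm_num) hy0.le
      _ ≤ 2 * y ^ (1 - α) := by
          apply mul_le_mul_of_nonneg_right _ (Real.rpow_pos_of_pos hy0 _).le
          calc (2:ℝ) ^ (1 - α) ≤ 2 ^ (1:ℝ) :=
                Real.rpow_le_rpow_of_exponent_le (by norm_num) (by linarith)
            _ = 2 := Real.rpow_one 2
  have h3 : y ^ α * Real.Gamma y ≤ 2 * Real.Gamma (y + α) := by
    have hsplit : y = y ^ α * y ^ (1 - α) := by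
      rw [← Real.rpow_add hy0]; norm_num
    nlinarith [Real.rpow_pos_of_pos hy0 α, Real.rpow_pos_of_pos hy0 (1 - α),
      mul_le_mul_of_nonneg_left h2 hGyα.le]
  have h4 : 4 * x * Real.Gamma y ≤ 2 * Real.Gamma (y + α) := by
    refine le_trans ?_ h3
    exact mul_le_mul_of_nonneg_right hk hGy.le
  -- conclude the ratio bound
  have hkey : α * (k + 1 : ℕ) + 1 = y + α := by push_cast [hy]; ring
  rw [hkey]
  rw [Real.norm_eq_abs, Real.norm_eq_abs, abs_div, abs_div,
    abs_of_pos (pow_pos hx _), abs_of_pos (pow_pos hx _),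
    abs_of_pos hGyα, abs_of_pos hGy]
  rw [div_le_iff₀ hGyα, pow_succ]
  have hxx : x ≤ 1 / 2 * Real.Gamma (y + α) / Real.Gamma y := by
    rw [le_div_iff₀ hGy]; nlinarith
  calc x ^ k * x ≤ x ^ k * (1 / 2 * Real.Gamma (y + α) / Real.Gamma y) :=
        mul_le_mul_of_nonneg_left hxx (pow_pos hx _).le
    _ = 1 / 2 * (x ^ k / Real.Gamma y) * Real.Gamma (y + α) := by ring

lemma beta_k {α : ℝ} (hα0 : 0 < α) (k : ℕ) {t : ℝ} (ht : 0 ≤ t) :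
    ∫ s in (0:ℝ)..t, (t - s) ^ (α - 1) * s ^ (α * k)
      = t ^ (α * k + α) *
        (Real.Gamma (α * k + 1) * Real.Gamma α / Real.Gamma (α * k + α + 1)) := by
  have hk : (0:ℝ) ≤ α * k := by positivity
  have h := real_beta (a := α * k + 1) (b := α) (by positivity) hα0 ht (by linarith)
  have e1 : α * (k:ℝ) + 1 - 1 = α * k := by ring
  have e2 : α * (k:ℝ) + 1 + α - 1 = α * k + α := by ring
  have e3 : α * (k:ℝ) + 1 + α = α * k + α + 1 := by ring
  rw [e1, e2, e3] at h
  rw [← h]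
  exact intervalIntegral.integral_congr fun s _ => mul_comm _ _

/-- The Mittag-Leffler function `E_α(t) = ∑_{k=0}^∞ t^k / Γ(αk+1)`. -/
noncomputable def mittagLeffler (α t : ℝ) : ℝ :=
  ∑' k : ℕ, t ^ k / Real.Gamma (α * k + 1)

theorem stmt4 {d : ℕ} (α : ℝ) (hα : α ∈ Set.Ioo (0:ℝ) 1)
    (g : EuclideanSpace ℝ (Fin d) → EuclideanSpace ℝ (Fin d))
    (L : ℝ) (hL : 0 < L)
    (hg : ∀ x y : EuclideanSpace ℝ (Fin d), ‖g x - g y‖ ≤ L * ‖x - y‖)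
    (T : ℝ) (hT : 0 < T)
    (f h : ℝ → EuclideanSpace ℝ (Fin d))
    (hf : ContinuousOn f (Set.Icc 0 T)) (hh : ContinuousOn h (Set.Icc 0 T))
    (xf xh : ℝ → EuclideanSpace ℝ (Fin d))
    (hxf : ContinuousOn xf (Set.Icc 0 T))
    (hxh : ContinuousOn xh (Set.Icc 0 T))
    (hxfeq : ∀ t ∈ Set.Icc (0:ℝ) T,
      xf t = f t + (1 / Real.Gamma α) •
        ∫ s in (0:ℝ)..t, ((t - s) ^ (α - 1)) • g (xf s))
    (hxheq : ∀ t ∈ Set.Icc (0:ℝ) T,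
      xh t = h t + (1 / Real.Gamma α) •
        ∫ s in (0:ℝ)..t, ((t - s) ^ (α - 1)) • g (xh s)) :
    (⨆ t : Set.Icc (0:ℝ) T, ‖xf t.1 - xh t.1‖) ≤
      (⨆ t : Set.Icc (0:ℝ) T, ‖f t.1 - h t.1‖) * mittagLeffler α (L * T ^ α) := by
  obtain ⟨hα0, hα1⟩ := hα
  have hGα : 0 < Real.Gamma α := Real.Gamma_pos_of_pos hα0
  have hgc : Continuous g := by
    refine (LipschitzWith.of_dist_le_mul (K := Real.toNNReal L) fun x y => ?_).continuous
    rw [dist_eq_norm, dist_eq_norm, Real.coe_toNNReal L hL.le]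
    exact hg x y
  set u : ℝ → ℝ := fun s => ‖xf s - xh s‖ with hu_def
  have hcu : ContinuousOn u (Icc 0 T) := (hxf.sub hxh).norm
  have h0T : (0:ℝ) ∈ Icc (0:ℝ) T := ⟨le_refl _, hT.le⟩
  haveI hne : Nonempty (Icc (0:ℝ) T) := ⟨⟨0, h0T⟩⟩
  have bddu : BddAbove (Set.range fun t : Icc (0:ℝ) T => u t.1) := by
    have := (isCompact_Icc.image_of_continuousOn hcu).isBounded.bddAbove
    rwa [Set.image_eq_range] at this
  have bddF : BddAbove (Set.range fun t : Icc (0:ℝ) T => ‖f t.1 - h t.1‖) := by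
    have := (isCompact_Icc.image_of_continuousOn (hf.sub hh).norm).isBounded.bddAbove
    rwa [Set.image_eq_range] at this
  set M := ⨆ t : Icc (0:ℝ) T, u t.1 with hM_def
  set F := ⨆ t : Icc (0:ℝ) T, ‖f t.1 - h t.1‖ with hF_def
  have hM : ∀ t ∈ Icc (0:ℝ) T, u t ≤ M := fun t ht => le_ciSup bddu ⟨t, ht⟩
  have hFle : ∀ t ∈ Icc (0:ℝ) T, ‖f t - h t‖ ≤ F := fun t ht => le_ciSup bddF ⟨t, ht⟩
  have hM0 : 0 ≤ M := le_trans (norm_nonneg _) (hM 0 h0T)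
  have hF0 : 0 ≤ F := le_trans (norm_nonneg _) (hFle 0 h0T)
  have Kint : ∀ t : ℝ, IntervalIntegrable (fun s => (t - s) ^ (α - 1)) volume 0 t := by
    intro t
    have := (intervalIntegral.intervalIntegrable_rpow' (by linarith : (-1:ℝ) < α - 1)
      (a := t) (b := 0)).comp_sub_left t
    simpa using this
  -- the key integral inequality
  have key : ∀ t ∈ Icc (0:ℝ) T, u t ≤ F + (1 / Real.Gamma α) *
      ∫ s in (0:ℝ)..t, (t - s) ^ (α - 1) * (L * u s) := by
    intro t ht
    obtain ⟨ht0, htT⟩ := ht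
    have hIccsub : Icc (0:ℝ) t ⊆ Icc 0 T := Icc_subset_Icc le_rfl htT
    have huIcc : uIcc (0:ℝ) t = Icc 0 t := uIcc_of_le ht0
    have hIf : IntervalIntegrable (fun s => (t - s) ^ (α - 1) • g (xf s)) volume 0 t :=
      intInt_smul_continuousOn' ht0 (Kint t) ((hgc.comp_continuousOn hxf).mono hIccsub)
    have hIh : IntervalIntegrable (fun s => (t - s) ^ (α - 1) • g (xh s)) volume 0 t :=
      intInt_smul_continuousOn' ht0 (Kint t) ((hgc.comp_continuousOn hxh).mono hIccsub)
    have hsub : xf t - xh t = (f t - h t) + (1 / Real.Gamma α) •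
        ((∫ s in (0:ℝ)..t, (t - s) ^ (α - 1) • g (xf s)) -
         (∫ s in (0:ℝ)..t, (t - s) ^ (α - 1) • g (xh s))) := by
      rw [hxfeq t ⟨ht0, htT⟩, hxheq t ⟨ht0, htT⟩, smul_sub]
      abel
    have hsub2 : (∫ s in (0:ℝ)..t, (t - s) ^ (α - 1) • g (xf s)) -
         (∫ s in (0:ℝ)..t, (t - s) ^ (α - 1) • g (xh s))
        = ∫ s in (0:ℝ)..t, (t - s) ^ (α - 1) • (g (xf s) - g (xh s)) := by
      rw [← intervalIntegral.integral_sub hIf hIh]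
      simp_rw [← smul_sub]
    have hnorm : ‖∫ s in (0:ℝ)..t, (t - s) ^ (α - 1) • (g (xf s) - g (xh s))‖ ≤
        ∫ s in (0:ℝ)..t, (t - s) ^ (α - 1) * (L * u s) := by
      have hnn : 0 ≤ ∫ s in (0:ℝ)..t, (t - s) ^ (α - 1) * (L * u s) := by
        refine intervalIntegral.integral_nonneg ht0 fun s hs => ?_
        exact mul_nonneg (Real.rpow_nonneg (by linarith [hs.2]) _)
          (mul_nonneg hL.le (norm_nonneg _))
      refine le_trans (intervalIntegral.norm_integral_le_abs_of_norm_le ?_ ?_)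
        (le_of_eq (abs_of_nonneg hnn))
      · refine (ae_restrict_iff' measurableSet_uIoc).2 (ae_of_all _ fun s hs => ?_)
        rw [uIoc_of_le ht0] at hs
        rw [norm_smul, Real.norm_eq_abs,
          abs_of_nonneg (Real.rpow_nonneg (by linarith [hs.2] : (0:ℝ) ≤ t - s) _)]
        exact mul_le_mul_of_nonneg_left (hg _ _)
          (Real.rpow_nonneg (by linarith [hs.2]) _)
      · refine (Kint t).mul_continuousOn ?_
        rw [huIcc]
        exact continuous_const.continuousOn.mul (hcu.mono hIccsub)
    have hb : u t ≤ ‖f t - h t‖ + (1 / Real.Gamma α) *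
        ‖∫ s in (0:ℝ)..t, (t - s) ^ (α - 1) • (g (xf s) - g (xh s))‖ := by
      show ‖xf t - xh t‖ ≤ _
      rw [hsub, hsub2]
      refine (norm_add_le _ _).trans ?_
      rw [norm_smul, Real.norm_eq_abs, abs_of_pos (by positivity)]
    have h1 : (1 / Real.Gamma α) *
        ‖∫ s in (0:ℝ)..t, (t - s) ^ (α - 1) • (g (xf s) - g (xh s))‖ ≤
        (1 / Real.Gamma α) * ∫ s in (0:ℝ)..t, (t - s) ^ (α - 1) * (L * u s) :=
      mul_le_mul_of_nonneg_left hnorm (by positivity)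
    linarith [hFle t ⟨ht0, htT⟩]
  -- coefficients
  set c : ℕ → ℝ := fun k => L ^ k / Real.Gamma (α * k + 1) with hc_def
  have hc0 : ∀ k, 0 < c k :=
    fun k => div_pos (pow_pos hL k) (Real.Gamma_pos_of_pos (by positivity))
  have hconts : ∀ (k : ℕ), Continuous (fun s : ℝ => s ^ (α * k)) := fun k =>
    Real.continuous_rpow_const (by positivity)
  have hGcast : ∀ k : ℕ, Real.Gamma (α * ((k:ℝ) + 1) + 1) = Real.Gamma (α * k + α + 1) := by
    intro k; ring_nf
  have main : ∀ n : ℕ, ∀ t ∈ Icc (0:ℝ) T,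
      u t ≤ F * (∑ k ∈ Finset.range n, c k * t ^ (α * k)) + M * (c n * t ^ (α * n)) := by
    intro n
    induction n with
    | zero =>
      intro t ht
      have hone : c 0 * t ^ (α * (0:ℕ)) = 1 := by
        simp [hc_def, Real.Gamma_one]
      simp only [Finset.range_zero, Finset.sum_empty, mul_zero, zero_add, hone, mul_one]
      exact hM t ht
    | succ n ih =>
      intro t ht
      obtain ⟨ht0, htT⟩ := ht
      have hIccsub : Icc (0:ℝ) t ⊆ Icc 0 T := Icc_subset_Icc le_rfl htT
      have huIcc : uIcc (0:ℝ) t = Icc 0 t := uIcc_of_le ht0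
      set B : ℝ → ℝ := fun s =>
        F * (∑ k ∈ Finset.range n, c k * s ^ (α * k)) + M * (c n * s ^ (α * n)) with hB_def
      have hBcont : Continuous B := by
        refine Continuous.add ?_ ?_
        · exact continuous_const.mul
            (continuous_finset_sum _ fun k _ => continuous_const.mul (hconts k))
        · exact continuous_const.mul (continuous_const.mul (hconts n))
      have hmono : (∫ s in (0:ℝ)..t, (t - s) ^ (α-1) * (L * u s)) ≤
          ∫ s in (0:ℝ)..t, (t - s) ^ (α-1) * (L * B s) := by
        refine intervalIntegral.integral_mono_on ht0 ?_ ?_ ?_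
        · refine (Kint t).mul_continuousOn ?_
          rw [huIcc]
          exact continuous_const.continuousOn.mul (hcu.mono hIccsub)
        · exact (Kint t).mul_continuousOn (continuous_const.mul hBcont).continuousOn
        · intro s hs
          have hKnn : 0 ≤ (t - s) ^ (α-1) := Real.rpow_nonneg (by linarith [hs.2]) _
          exact mul_le_mul_of_nonneg_left
            (mul_le_mul_of_nonneg_left (ih s (hIccsub hs)) hL.le) hKnn
      -- expand the integrand pointwise
      have hpt : ∀ s : ℝ, (t - s) ^ (α-1) * (L * B s)
          = (∑ k ∈ Finset.range n,
              (L * F * c k) * ((t - s) ^ (α-1) * s ^ (α * k)))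
            + (L * M * c n) * ((t - s) ^ (α-1) * s ^ (α * n)) := by
        intro s
        have h1 : (t - s) ^ (α-1) * (∑ k ∈ Finset.range n, c k * s ^ (α * k))
            = ∑ k ∈ Finset.range n, c k * ((t - s) ^ (α-1) * s ^ (α * k)) := by
          rw [Finset.mul_sum]
          exact Finset.sum_congr rfl fun k _ => by ring
        have h2 : (∑ k ∈ Finset.range n,
              (L * F * c k) * ((t - s) ^ (α-1) * s ^ (α * k)))
            = (L * F) * ∑ k ∈ Finset.range n, c k * ((t - s) ^ (α-1) * s ^ (α * k)) := by
          rw [Finset.mul_sum]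
          exact Finset.sum_congr rfl fun k _ => by ring
        rw [h2, ← h1, hB_def]
        ring
      have hint_k : ∀ k : ℕ,
          IntervalIntegrable (fun s => (t - s) ^ (α-1) * s ^ (α * k)) volume 0 t :=
        fun k => (Kint t).mul_continuousOn (hconts k).continuousOn
      have hval : (∫ s in (0:ℝ)..t, (t - s) ^ (α-1) * (L * B s))
          = (∑ k ∈ Finset.range n, (L * F * c k) *
              (t ^ (α * k + α) * (Real.Gamma (α * k + 1) * Real.Gamma α /
                Real.Gamma (α * k + α + 1))))
            + (L * M * c n) * (t ^ (α * n + α) * (Real.Gamma (α * n + 1) * Real.Gamma α /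
                Real.Gamma (α * n + α + 1))) := by
        rw [intervalIntegral.integral_congr (fun s _ => hpt s)]
        have hsum_int : IntervalIntegrable (fun s => ∑ k ∈ Finset.range n,
            L * F * c k * ((t - s) ^ (α-1) * s ^ (α * k))) volume 0 t := by
          have := IntervalIntegrable.sum (μ := volume) (a := (0:ℝ)) (b := t) (Finset.range n)
            (f := fun k => fun s => L * F * c k * ((t - s) ^ (α-1) * s ^ (α * k)))
            (fun k _ => (hint_k k).const_mul _)
          have he : (∑ k ∈ Finset.range n,
              fun s : ℝ => L * F * c k * ((t - s) ^ (α-1) * s ^ (α * k)))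
              = fun s : ℝ => ∑ k ∈ Finset.range n,
                L * F * c k * ((t - s) ^ (α-1) * s ^ (α * k)) := by
            funext s; simp
          rwa [he] at this
        rw [intervalIntegral.integral_add hsum_int ((hint_k n).const_mul _)]
        rw [intervalIntegral.integral_finset_sum (fun k _ => (hint_k k).const_mul _)]
        simp_rw [intervalIntegral.integral_const_mul, beta_k hα0 _ ht0]
      -- simplify each term
      have hterm : ∀ (C : ℝ) (k : ℕ), (1 / Real.Gamma α) * ((L * C * c k) *
            (t ^ (α * k + α) * (Real.Gamma (α * k + 1) * Real.Gamma α /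
              Real.Gamma (α * k + α + 1))))
          = C * (c (k+1) * t ^ (α * ((k+1 : ℕ) : ℝ))) := by
        intro C k
        have hG1 : (0:ℝ) < Real.Gamma (α * k + 1) := Real.Gamma_pos_of_pos (by positivity)
        have hG2 : (0:ℝ) < Real.Gamma (α * k + α + 1) := Real.Gamma_pos_of_pos (by positivity)
        have hek : ((k+1:ℕ):ℝ) = (k:ℝ) + 1 := by push_cast; ring
        have he : α * ((k+1:ℕ):ℝ) = α * k + α := by push_cast; ring
        rw [hc_def]
        simp only [hek, he, hGcast k]
        rw [pow_succ]
        field_simp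
      have step1 : u t ≤ F + (1 / Real.Gamma α) *
          ∫ s in (0:ℝ)..t, (t - s) ^ (α-1) * (L * B s) := by
        refine (key t ⟨ht0, htT⟩).trans ?_
        have := mul_le_mul_of_nonneg_left hmono (by positivity : (0:ℝ) ≤ 1 / Real.Gamma α)
        linarith
      rw [hval, mul_add, Finset.mul_sum] at step1
      rw [Finset.sum_congr rfl (fun k _ => hterm F k), hterm M n] at step1
      rw [Finset.sum_range_succ']
      have hone : c 0 * t ^ (α * ((0:ℕ):ℝ)) = 1 := by simp [hc_def, Real.Gamma_one]
      rw [mul_add, Finset.mul_sum, hone, mul_one]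
      linarith
  -- pass to the limit
  set x := L * T ^ α with hx_def
  have hxpos : 0 < x := mul_pos hL (Real.rpow_pos_of_pos hT α)
  set a : ℕ → ℝ := fun k => x ^ k / Real.Gamma (α * k + 1) with ha_def
  have hsum : Summable a := ml_summable' hα0 hα1 hxpos
  have ha0 : ∀ k, 0 ≤ a k := fun k =>
    div_nonneg (pow_nonneg hxpos.le _) (Real.Gamma_pos_of_pos (by positivity)).le
  have hca : ∀ (k : ℕ) (t : ℝ), t ∈ Icc (0:ℝ) T → c k * t ^ (α * k) ≤ a k := by
    intro k t ht
    obtain ⟨ht0, htT⟩ := ht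
    have h1 : t ^ (α * (k:ℕ)) ≤ T ^ (α * (k:ℕ)) :=
      Real.rpow_le_rpow ht0 htT (by positivity)
    have h2 : x ^ k = L ^ k * T ^ (α * (k:ℕ)) := by
      rw [hx_def, mul_pow, ← Real.rpow_natCast (T ^ α) k, ← Real.rpow_mul hT.le]
    have hG : (0:ℝ) < Real.Gamma (α * k + 1) := Real.Gamma_pos_of_pos (by positivity)
    rw [ha_def, hc_def]
    simp only
    rw [h2, div_mul_eq_mul_div]
    exact div_le_div₀ (by positivity)
      (mul_le_mul_of_nonneg_left h1 (pow_nonneg hL.le k)) hG le_rfl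
  have final : ∀ t : Icc (0:ℝ) T, u t.1 ≤ F * mittagLeffler α x := by
    intro ⟨t, ht⟩
    have seq_le : ∀ n : ℕ, u t ≤ F * (∑ k ∈ Finset.range n, a k) + M * a n := by
      intro n
      refine (main n t ht).trans ?_
      have hs : (∑ k ∈ Finset.range n, c k * t ^ (α * k)) ≤ ∑ k ∈ Finset.range n, a k :=
        Finset.sum_le_sum fun k _ => hca k t ht
      have hn : c n * t ^ (α * n) ≤ a n := hca n t ht
      have := mul_le_mul_of_nonneg_left hs hF0
      have := mul_le_mul_of_nonneg_left hn hM0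
      linarith
    have hlim : Filter.Tendsto (fun n : ℕ => F * (∑ k ∈ Finset.range n, a k) + M * a n)
        Filter.atTop (nhds (F * (∑' k, a k) + M * 0)) :=
      (Filter.Tendsto.const_mul F hsum.hasSum.tendsto_sum_nat).add
        (Filter.Tendsto.const_mul M hsum.tendsto_atTop_zero)
    have := ge_of_tendsto hlim (Filter.Eventually.of_forall seq_le)
    simpa [mittagLeffler] using this
  exact ciSup_le fun t => final t
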